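/- Let M ≥ 2 be an integer, R > 0, τ > 0, and set a_k := R (cos(2πk/M), sin(2πk/M)) ∈ ℝ² for 0 ≤ k ≤ M−1. Let N ∼ N(0, I₂) be a standard Gaussian vector in ℝ² and set X := a_0 + τN. Then P[ ∃ k ∈ {1, …, M−1} : ‖X − a_k‖₂ ≤ ‖X − a_0‖₂ ] ≤ 2 Φ̄( R sin(π/M) / τ ), where Φ̄(t) := P[G ≥ t] for a standard one-dimensional Gaussian G ∼ N(0,1). -/

import Mathlib

open MeasureTheory ProbabilityTheory

/-- The `k`-th of `M` equally spaced points on the circle of radius `R` in `ℝ²`. -/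
noncomputable def circpt (R : ℝ) (M k : ℕ) : EuclideanSpace ℝ (Fin 2) :=
  (WithLp.equiv 2 (Fin 2 → ℝ)).symm
    ![R * Real.cos (2 * Real.pi * k / M), R * Real.sin (2 * Real.pi * k / M)]

/-- The standard Gaussian measure `N(0, I₂)` on `ℝ²`. -/
noncomputable def stdGauss2 : Measure (EuclideanSpace ℝ (Fin 2)) :=
  (Measure.pi fun _ : Fin 2 => gaussianReal 0 1).map
    (MeasurableEquiv.toLp 2 (Fin 2 → ℝ))

open scoped ENNReal NNReal

noncomputable section

lemma map_withDensity_equiv {α β : Type*} [MeasurableSpace α] [MeasurableSpace β]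
    (e : α ≃ᵐ β) (μ : Measure α) (g : α → ℝ≥0∞) (hg : Measurable g) :
    (μ.withDensity g).map e = (μ.map e).withDensity (g ∘ e.symm) := by
  ext A hA
  rw [Measure.map_apply e.measurable hA, withDensity_apply _ (e.measurable hA),
    withDensity_apply _ hA, setLIntegral_map hA (hg.comp e.symm.measurable) e.measurable]
  refine setLIntegral_congr_fun (e.measurable hA) (fun x _ => ?_)
  simp

lemma pi2_withDensity (g : ℝ → ℝ≥0∞) (hg : Measurable g)
    [SigmaFinite ((volume : Measure ℝ).withDensity g)] :
    (Measure.pi fun _ : Fin 2 => (volume : Measure ℝ).withDensity g) =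
      (volume : Measure (Fin 2 → ℝ)).withDensity (fun f => g (f 0) * g (f 1)) := by
  refine Measure.pi_eq fun s hs => ?_
  have hind : ∀ f : Fin 2 → ℝ,
      (Set.univ.pi s).indicator (fun f => g (f 0) * g (f 1)) f
        = (s 0).indicator g (f 0) * (s 1).indicator g (f 1) := by
    intro f
    by_cases h : f ∈ Set.univ.pi s
    · have h0 : f 0 ∈ s 0 := h 0 trivial
      have h1 : f 1 ∈ s 1 := h 1 trivial
      rw [Set.indicator_of_mem h, Set.indicator_of_mem h0, Set.indicator_of_mem h1]
    · rw [Set.indicator_of_notMem h]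
      rw [Set.mem_univ_pi] at h
      push_neg at h
      obtain ⟨i, hi⟩ := h
      match i, hi with
      | 0, hi => rw [Set.indicator_of_notMem hi, zero_mul]
      | 1, hi => rw [Set.indicator_of_notMem hi, mul_zero]
  rw [withDensity_apply _ (MeasurableSet.univ_pi hs), ← lintegral_indicator (MeasurableSet.univ_pi hs)]
  simp_rw [hind]
  have hF : Measurable fun p : ℝ × ℝ => (s 0).indicator g p.1 * (s 1).indicator g p.2 :=
    ((hg.indicator (hs 0)).comp measurable_fst).mul ((hg.indicator (hs 1)).comp measurable_snd)
  have h2 := (measurePreserving_piFinTwo (fun _ : Fin 2 => (volume : Measure ℝ))).lintegral_comp hF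
  simp only [MeasurableEquiv.piFinTwo_apply] at h2
  rw [MeasureTheory.volume_pi, h2,
    lintegral_prod_mul (hg.indicator (hs 0)).aemeasurable (hg.indicator (hs 1)).aemeasurable,
    Fin.prod_univ_two, withDensity_apply _ (hs 0), withDensity_apply _ (hs 1),
    lintegral_indicator (hs 0), lintegral_indicator (hs 1)]

lemma stdGauss2_eq : stdGauss2 =
    (volume : Measure (EuclideanSpace ℝ (Fin 2))).withDensity
      (fun x => gaussianPDF 0 1 (x 0) * gaussianPDF 0 1 (x 1)) := by
  haveI : SigmaFinite ((volume : Measure ℝ).withDensity (gaussianPDF 0 1)) := by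
    rw [← gaussianReal_of_var_ne_zero 0 one_ne_zero]; infer_instance
  rw [stdGauss2, gaussianReal_of_var_ne_zero 0 one_ne_zero,
    pi2_withDensity _ (measurable_gaussianPDF 0 1),
    map_withDensity_equiv (MeasurableEquiv.toLp 2 (Fin 2 → ℝ)) _
      (fun f => gaussianPDF 0 1 (f 0) * gaussianPDF 0 1 (f 1))
      (by exact (((measurable_gaussianPDF 0 1).comp (measurable_pi_apply 0)).mul
        ((measurable_gaussianPDF 0 1).comp (measurable_pi_apply 1)))),
    (show MeasurePreserving (MeasurableEquiv.toLp 2 (Fin 2 → ℝ)) volume volume from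
      (EuclideanSpace.volume_preserving_symm_measurableEquiv_toLp (Fin 2)).symm
      (MeasurableEquiv.toLp 2 (Fin 2 → ℝ)).symm).map_eq]
  rfl

lemma stdGauss2_rot (ρ : EuclideanSpace ℝ (Fin 2) ≃ₗᵢ[ℝ] EuclideanSpace ℝ (Fin 2))
    {A : Set (EuclideanSpace ℝ (Fin 2))} (hA : MeasurableSet A) :
    stdGauss2 (⇑ρ ⁻¹' A) = stdGauss2 A := by
  have hAρ : MeasurableSet (⇑ρ ⁻¹' A) := hA.preimage ρ.continuous.measurable
  have hDrad : ∀ x : EuclideanSpace ℝ (Fin 2),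
      gaussianPDF 0 1 (x 0) * gaussianPDF 0 1 (x 1)
        = ENNReal.ofReal ((Real.sqrt (2 * Real.pi))⁻¹ ^ 2 * Real.exp (- ‖x‖ ^ 2 / 2)) := by
    intro x
    have hx : ‖x‖ ^ 2 = (x 0) ^ 2 + (x 1) ^ 2 := by
      rw [EuclideanSpace.norm_eq, Real.sq_sqrt (by positivity)]
      simp [Fin.sum_univ_two, sq_abs]
    rw [gaussianPDF, gaussianPDF, gaussianPDFReal, gaussianPDFReal,
      ← ENNReal.ofReal_mul (by positivity)]
    congr 1
    rw [hx]
    push_cast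
    rw [mul_one, mul_one]
    rw [mul_mul_mul_comm, ← Real.exp_add, sq]
    ring_nf
  rw [stdGauss2_eq, withDensity_apply _ hAρ, withDensity_apply _ hA]
  simp_rw [hDrad]
  have hFm : Measurable fun x : EuclideanSpace ℝ (Fin 2) =>
      ENNReal.ofReal ((Real.sqrt (2 * Real.pi))⁻¹ ^ 2 * Real.exp (- ‖x‖ ^ 2 / 2)) := by
    fun_prop
  have := (ρ.measurePreserving.setLIntegral_comp_preimage (s := A) hA hFm)
  rw [← this]
  refine setLIntegral_congr_fun hAρ (fun x _ => ?_)
  rw [ρ.norm_map]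

lemma measurable_coord (i : Fin 2) : Measurable fun x : EuclideanSpace ℝ (Fin 2) => x i :=
  (measurable_pi_apply i).comp (MeasurableEquiv.toLp 2 (Fin 2 → ℝ)).symm.measurable

lemma stdGauss2_coord (t : ℝ) :
    stdGauss2 {x : EuclideanSpace ℝ (Fin 2) | t ≤ x 0} = gaussianReal 0 1 {g | t ≤ g} := by
  have hms : MeasurableSet {x : EuclideanSpace ℝ (Fin 2) | t ≤ x 0} :=
    measurableSet_le measurable_const (measurable_coord 0)
  rw [stdGauss2, Measure.map_apply (MeasurableEquiv.toLp 2 (Fin 2 → ℝ)).measurable hms]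
  have hpre : (MeasurableEquiv.toLp 2 (Fin 2 → ℝ)) ⁻¹'
      {x : EuclideanSpace ℝ (Fin 2) | t ≤ x 0}
      = Set.univ.pi (fun i : Fin 2 => if i = 0 then Set.Ici t else Set.univ) := by
    ext f
    simp [Fin.forall_fin_two, MeasurableEquiv.toLp_apply]
  rw [hpre, Measure.pi_pi, Fin.prod_univ_two]
  simp [Set.Ici]

lemma stdGauss2_halfplane (a b t : ℝ) (hab : a ^ 2 + b ^ 2 = 1) :
    stdGauss2 {x : EuclideanSpace ℝ (Fin 2) | t ≤ a * x 0 + b * x 1}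
      = gaussianReal 0 1 {g | t ≤ g} := by
  set v : Fin 2 → EuclideanSpace ℝ (Fin 2) :=
    ![(WithLp.equiv 2 (Fin 2 → ℝ)).symm ![a, b],
      (WithLp.equiv 2 (Fin 2 → ℝ)).symm ![-b, a]] with hv
  have hinner : ∀ (i : Fin 2) (x : EuclideanSpace ℝ (Fin 2)),
      (inner ℝ (v i) x : ℝ) = v i 0 * x 0 + v i 1 * x 1 := by
    intro i x
    simp [PiLp.inner_apply, RCLike.inner_apply, Fin.sum_univ_two]
    ring
  have honv : Orthonormal ℝ v := by
    rw [orthonormal_iff_ite]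
    intro i j
    fin_cases i <;> fin_cases j <;>
      · simp only [hinner]
        simp [hv]
        try nlinarith [hab]
  have hsp : ⊤ ≤ Submodule.span ℝ (Set.range v) :=
    (honv.linearIndependent.span_eq_top_of_card_eq_finrank
      (by simp [finrank_euclideanSpace_fin])).ge
  set B := OrthonormalBasis.mk honv hsp with hB
  set ρ := B.repr with hρ
  have hset : {x : EuclideanSpace ℝ (Fin 2) | t ≤ a * x 0 + b * x 1}
      = ⇑ρ ⁻¹' {y : EuclideanSpace ℝ (Fin 2) | t ≤ y 0} := by
    ext x
    have : ρ x 0 = a * x 0 + b * x 1 := by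
      rw [hρ, B.repr_apply_apply, hB]
      rw [show (OrthonormalBasis.mk honv hsp : Fin 2 → _) = v from OrthonormalBasis.coe_mk _ _]
      rw [hinner]
      simp [hv]
    simp only [Set.mem_preimage, Set.mem_setOf_eq, this]
  rw [hset, stdGauss2_rot ρ (measurableSet_le measurable_const (measurable_coord 0)),
    stdGauss2_coord]

lemma normsq2 (u : EuclideanSpace ℝ (Fin 2)) : ‖u‖ ^ 2 = u 0 ^ 2 + u 1 ^ 2 := by
  rw [EuclideanSpace.norm_eq, Real.sq_sqrt (by positivity)]
  simp [Fin.sum_univ_two, sq_abs]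

instance : IsProbabilityMeasure stdGauss2 := by
  rw [stdGauss2]
  exact Measure.isProbabilityMeasure_map (MeasurableEquiv.toLp 2 (Fin 2 → ℝ)).measurable.aemeasurable

set_option maxHeartbeats 1000000

/-- **Voronoi crossing bound.** For `X = a₀ + τN` with `N ∼ N(0, I₂)`, the probability that
some other center `a_k` is at least as close to `X` as `a₀` is at most
`2 Φ̄(R sin(π/M)/τ)`. -/
theorem stmt13 (M : ℕ) (hM : 2 ≤ M) (R τ : ℝ) (hR : 0 < R) (hτ : 0 < τ) :
    (stdGauss2 {N | ∃ k, 1 ≤ k ∧ k ≤ M - 1 ∧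
        ‖circpt R M 0 + τ • N - circpt R M k‖ ≤ ‖circpt R M 0 + τ • N - circpt R M 0‖}).toReal
      ≤ 2 * (gaussianReal 0 1 {g | R * Real.sin (Real.pi / M) / τ ≤ g}).toReal := by
  set α := Real.pi / M with hα
  set t := R * Real.sin α / τ with ht
  have hMR : (2:ℝ) ≤ M := by exact_mod_cast hM
  have hM0 : (0:ℝ) < M := by linarith
  have hα0 : 0 < α := by positivity
  have hαle : α ≤ Real.pi / 2 := by
    rw [hα, div_le_div_iff₀ hM0 (by norm_num)]
    nlinarith [Real.pi_pos]
  have hsα : 0 < Real.sin α := Real.sin_pos_of_pos_of_lt_pi hα0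
    (by nlinarith [Real.pi_pos])
  have hcα : 0 ≤ Real.cos α := Real.cos_nonneg_of_mem_Icc ⟨by linarith, hαle⟩
  clear_value α t
  set H₁ : Set (EuclideanSpace ℝ (Fin 2)) := {x | t ≤ (-Real.sin α) * x 0 + Real.cos α * x 1}
    with hH₁
  set H₂ : Set (EuclideanSpace ℝ (Fin 2)) := {x | t ≤ (-Real.sin α) * x 0 + (-Real.cos α) * x 1}
    with hH₂
  have hsub : {N : EuclideanSpace ℝ (Fin 2) | ∃ k, 1 ≤ k ∧ k ≤ M - 1 ∧
      ‖circpt R M 0 + τ • N - circpt R M k‖ ≤ ‖circpt R M 0 + τ • N - circpt R M 0‖}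
      ⊆ H₁ ∪ H₂ := by
    rintro N ⟨k, hk1, hkM, hnorm⟩
    set θ := Real.pi * k / M with hθ
    have hk1' : (1:ℝ) ≤ k := by exact_mod_cast hk1
    have hkM' : (k:ℝ) ≤ M - 1 := by
      have : (k:ℝ) ≤ ((M - 1 : ℕ) : ℝ) := by exact_mod_cast hkM
      rwa [Nat.cast_sub (by omega), Nat.cast_one] at this
    have hθα : α ≤ θ := by
      have h6 : Real.pi * 1 ≤ Real.pi * k := by nlinarith [Real.pi_pos]
      calc α = Real.pi * 1 / M := by rw [hα]; ring
        _ ≤ Real.pi * k / M := by gcongr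
        _ = θ := hθ.symm
    have hθπ : θ ≤ Real.pi - α := by
      rw [hθ, hα, le_sub_iff_add_le, ← add_div, div_le_iff₀ hM0]
      nlinarith [Real.pi_pos]
    have hθ0 : 0 < θ := by
      rw [hθ]
      positivity
    have hsθ : 0 < Real.sin θ := Real.sin_pos_of_pos_of_lt_pi hθ0 (by linarith)
    -- extract the squared-norm inequality in coordinates
    have hck0 : (circpt R M k) 0 = R * Real.cos (2 * Real.pi * k / M) := rfl
    have hck1 : (circpt R M k) 1 = R * Real.sin (2 * Real.pi * k / M) := rfl
    have h00 : (circpt R M 0) 0 = R := by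
      show R * Real.cos (2 * Real.pi * (0:ℕ) / M) = R
      norm_num
    have h01 : (circpt R M 0) 1 = 0 := by
      show R * Real.sin (2 * Real.pi * (0:ℕ) / M) = 0
      norm_num
    have hφ : 2 * Real.pi * (k:ℝ) / M = 2 * θ := by rw [hθ]; ring
    clear_value θ
    have hsq : (R + τ * N 0 - R * Real.cos (2 * θ)) ^ 2
        + (0 + τ * N 1 - R * Real.sin (2 * θ)) ^ 2
        ≤ (R + τ * N 0 - R) ^ 2 + (0 + τ * N 1 - 0) ^ 2 := by
      have h := pow_le_pow_left₀ (norm_nonneg _) hnorm 2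
      rw [normsq2, normsq2] at h
      simp only [PiLp.add_apply, PiLp.sub_apply, PiLp.smul_apply, smul_eq_mul,
        hck0, hck1, h00, h01, hφ] at h
      exact h
    set X0 := R + τ * N 0 with hX0
    set X1 := τ * N 1 with hX1
    clear_value X0 X1
    clear hnorm hck0 hck1 h00 h01
    have hpyth : R ^ 2 * (Real.sin (2 * θ) ^ 2 + Real.cos (2 * θ) ^ 2) = R ^ 2 * 1 := by
      rw [Real.sin_sq_add_cos_sq]
    have hstep : X0 ≤ X0 * Real.cos (2 * θ) + X1 * Real.sin (2 * θ) := by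
      nlinarith [hsq, hpyth, hR]
    have e1 : X0 * Real.cos (2 * θ) = X0 * (2 * Real.cos θ ^ 2 - 1) := by
      rw [Real.cos_two_mul]
    have e2 : X1 * Real.sin (2 * θ) = X1 * (2 * Real.sin θ * Real.cos θ) := by
      rw [Real.sin_two_mul]
    have e3 : X0 * Real.sin θ ^ 2 = X0 - X0 * Real.cos θ ^ 2 := by
      rw [Real.sin_sq]; ring
    have h2 : Real.sin θ * (X0 * Real.sin θ) ≤ Real.sin θ * (X1 * Real.cos θ) := by
      nlinarith [hstep, e1, e2, e3]
    have hcond : X0 * Real.sin θ ≤ X1 * Real.cos θ := le_of_mul_le_mul_left h2 hsθ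
    clear h2 hsq hstep hpyth e1 e2 e3 hφ
    rcases le_or_gt 0 (N 1) with hy | hy
    · left
      have hX1n : 0 ≤ X1 := by rw [hX1]; exact mul_nonneg hτ.le hy
      have hsinsub : Real.sin α * Real.cos θ ≤ Real.cos α * Real.sin θ := by
        have h5 := Real.sin_nonneg_of_nonneg_of_le_pi
          (by linarith : (0:ℝ) ≤ θ - α) (by linarith : θ - α ≤ Real.pi)
        rw [Real.sin_sub] at h5
        linarith
      have h3 : Real.sin θ * (X0 * Real.sin α) ≤ Real.sin θ * (X1 * Real.cos α) := by
        nlinarith [mul_le_mul_of_nonneg_right hcond hsα.le,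
          mul_le_mul_of_nonneg_left hsinsub hX1n]
      have h4 : X0 * Real.sin α ≤ X1 * Real.cos α := le_of_mul_le_mul_left h3 hsθ
      show t ≤ (-Real.sin α) * N 0 + Real.cos α * N 1
      rw [ht, div_le_iff₀ hτ]
      nlinarith [h4]
    · right
      have hX1n : X1 ≤ 0 := by
        rw [hX1]
        exact mul_nonpos_of_nonneg_of_nonpos hτ.le hy.le
      have hsinadd : 0 ≤ Real.sin θ * Real.cos α + Real.cos θ * Real.sin α := by
        have h5 := Real.sin_nonneg_of_nonneg_of_le_pi
          (by linarith : (0:ℝ) ≤ θ + α) (by linarith : θ + α ≤ Real.pi)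
        rwa [Real.sin_add] at h5
      have h3 : Real.sin θ * (X0 * Real.sin α) ≤ Real.sin θ * (X1 * (-Real.cos α)) := by
        nlinarith [mul_le_mul_of_nonneg_right hcond hsα.le,
          mul_nonneg (neg_nonneg.mpr hX1n) hsinadd]
      have h4 : X0 * Real.sin α ≤ X1 * (-Real.cos α) := le_of_mul_le_mul_left h3 hsθ
      show t ≤ (-Real.sin α) * N 0 + (-Real.cos α) * N 1
      rw [ht, div_le_iff₀ hτ]
      nlinarith [h4]
  have hHab : (-Real.sin α) ^ 2 + (Real.cos α) ^ 2 = 1 := by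
    rw [neg_pow]
    simpa using Real.sin_sq_add_cos_sq α
  have hHab2 : (-Real.sin α) ^ 2 + (-Real.cos α) ^ 2 = 1 := by
    rw [neg_pow, neg_pow]
    simpa using Real.sin_sq_add_cos_sq α
  have hH1 : stdGauss2 H₁ = gaussianReal 0 1 {g | t ≤ g} := stdGauss2_halfplane _ _ t hHab
  have hH2 : stdGauss2 H₂ = gaussianReal 0 1 {g | t ≤ g} := stdGauss2_halfplane _ _ t hHab2
  have hle : stdGauss2 {N : EuclideanSpace ℝ (Fin 2) | ∃ k, 1 ≤ k ∧ k ≤ M - 1 ∧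
      ‖circpt R M 0 + τ • N - circpt R M k‖ ≤ ‖circpt R M 0 + τ • N - circpt R M 0‖}
      ≤ 2 * gaussianReal 0 1 {g | t ≤ g} := by
    calc stdGauss2 _ ≤ stdGauss2 (H₁ ∪ H₂) := measure_mono hsub
      _ ≤ stdGauss2 H₁ + stdGauss2 H₂ := measure_union_le _ _
      _ = 2 * gaussianReal 0 1 {g | t ≤ g} := by rw [hH1, hH2, two_mul]
  have hne : (2 : ℝ≥0∞) * gaussianReal 0 1 {g | t ≤ g} ≠ ⊤ :=
    ENNReal.mul_ne_top (by norm_num) (measure_ne_top _ _)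
  calc _ ≤ ((2 : ℝ≥0∞) * gaussianReal 0 1 {g | t ≤ g}).toReal := ENNReal.toReal_mono hne hle
    _ = 2 * (gaussianReal 0 1 {g | t ≤ g}).toReal := by
      rw [ENNReal.toReal_mul]
      norm_num

end
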